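/- Let δ ∈ (0,1), Π ⊆ ℝ^d nonempty closed convex, θ, z ∈ ℝ^d. Define f(z) = (1/2)δ(δ-1) dist²(Π, (z+θ)/(1-δ)) + (δ/(2(1-δ)))|z+θ|² + (1/2)|z|² and, for π ∈ ℝ^d, f(z; π) = (1/2)δ(δ-1)|π|² + δ π·θ + δ π·z + (1/2)|z|². Then f(z; π) ≤ f(z) for every π ∈ Π, with equality for π = Proj_Π((z+θ)/(1-δ)). -/

import Mathlib

open Real Metric
open scoped RealInnerProductSpace

/-- Pointwise comparison `f(z; p) ≤ f(z)` for `p ∈ P`, with equality at the metric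
projection of `(z+θ)/(1-δ)` onto `P`. -/
theorem stmt_11 {d : ℕ} (P : Set (EuclideanSpace ℝ (Fin d)))
    (hne : P.Nonempty) (hcl : IsClosed P) (hcv : Convex ℝ P)
    (δ : ℝ) (hδ : δ ∈ Set.Ioo (0 : ℝ) 1) (θ z : EuclideanSpace ℝ (Fin d))
    (fz : ℝ)
    (hfz : fz = (1 / 2) * δ * (δ - 1) * (Metric.infDist ((1 - δ)⁻¹ • (z + θ)) P) ^ 2
        + (δ / (2 * (1 - δ))) * ‖z + θ‖ ^ 2 + (1 / 2) * ‖z‖ ^ 2)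
    (F : EuclideanSpace ℝ (Fin d) → ℝ)
    (hF : ∀ p, F p = (1 / 2) * δ * (δ - 1) * ‖p‖ ^ 2 + δ * ⟪p, θ⟫ + δ * ⟪p, z⟫
        + (1 / 2) * ‖z‖ ^ 2)
    (pstar : EuclideanSpace ℝ (Fin d)) (hpP : pstar ∈ P)
    (hproj : ∀ p ∈ P, ‖pstar - (1 - δ)⁻¹ • (z + θ)‖ ≤ ‖p - (1 - δ)⁻¹ • (z + θ)‖) :
    (∀ p ∈ P, F p ≤ fz) ∧ F pstar = fz := by
  obtain ⟨hδ0, hδ1⟩ := hδ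
  have h1δ : (1 : ℝ) - δ ≠ 0 := by linarith
  set c : EuclideanSpace ℝ (Fin d) := (1 - δ)⁻¹ • (z + θ) with hc
  -- rewrite F p in terms of ‖p - c‖²
  have key : ∀ p : EuclideanSpace ℝ (Fin d),
      F p = (1 / 2) * δ * (δ - 1) * ‖p - c‖ ^ 2
        + (δ / (2 * (1 - δ))) * ‖z + θ‖ ^ 2 + (1 / 2) * ‖z‖ ^ 2 := by
    intro p
    have h1 : ‖p - c‖ ^ 2 = ‖p‖ ^ 2 - 2 * ⟪p, c⟫ + ‖c‖ ^ 2 := by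
      rw [← real_inner_self_eq_norm_sq, ← real_inner_self_eq_norm_sq,
        ← real_inner_self_eq_norm_sq]
      simp only [inner_sub_left, inner_sub_right, real_inner_comm p c]
      ring
    have h2 : ⟪p, c⟫ = (1 - δ)⁻¹ * (⟪p, z⟫ + ⟪p, θ⟫) := by
      rw [hc, real_inner_smul_right, inner_add_right]
    have h3 : ‖c‖ ^ 2 = ((1 - δ)⁻¹) ^ 2 * ‖z + θ‖ ^ 2 := by
      rw [hc, norm_smul]
      simp [mul_pow, abs_inv, sq_abs]
    rw [hF p, h1, h2, h3]
    field_simp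
    ring
  have hdist : Metric.infDist c P = ‖pstar - c‖ := by
    apply le_antisymm
    · have := Metric.infDist_le_dist_of_mem (x := c) hpP
      rwa [dist_eq_norm, norm_sub_rev] at this
    · by_contra h
      push_neg at h
      obtain ⟨p, hp, hlt⟩ := (Metric.infDist_lt_iff hne).1 h
      rw [dist_eq_norm, norm_sub_rev] at hlt
      exact absurd (hproj p hp) (not_le.2 hlt)
  have hneg : (1 / 2) * δ * (δ - 1) < 0 := by nlinarith
  constructor
  · intro p hp
    rw [key p, hfz, hdist]
    have h4 : ‖pstar - c‖ ≤ ‖p - c‖ := hproj p hp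
    have h5 : ‖pstar - c‖ ^ 2 ≤ ‖p - c‖ ^ 2 := by
      have := norm_nonneg (pstar - c); nlinarith
    nlinarith
  · rw [key pstar, hfz, hdist]
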